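/- arXiv:2004.08623 — 6 statements merged into one kernel-verified Lean document; each statement's English description precedes it below -/
import Mathlib

section
/- There exists a constant C > 0 (depending only on γ) such that for all n ≥ 1 and all real η, |a_n(η)| ≤ C/(1 + η²), where a_n(η) := (1/(n+1)) Σ_{k ∈ T̂_n} 2 sin²(πk)/(4 sin²(πk) − η² + 2iγη). -/
open Finset Complex

lemma key_real (γ : ℝ) (hγ : 0 < γ) (t η : ℝ) (ht0 : 0 ≤ t) (ht2 : t ≤ 2) :
    t * (1 + η ^ 2) ≤ (100 * (1 + 1/γ)) * Real.sqrt ((2*t - η^2)^2 + (2*γ*η)^2) := by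
  set C := 100 * (1 + 1/γ) with hCdef
  set r := Real.sqrt ((2*t - η^2)^2 + (2*γ*η)^2) with hr
  have hrnn : 0 ≤ r := Real.sqrt_nonneg _
  have hginv : 0 < 1/γ := by positivity
  have hre : |2*t - η^2| ≤ r := by
    rw [hr, ← Real.sqrt_sq_eq_abs]
    exact Real.sqrt_le_sqrt (by nlinarith [sq_nonneg (2*γ*η)])
  have him : 2*γ*|η| ≤ r := by
    have : |2*γ*η| ≤ r := by
      rw [hr, ← Real.sqrt_sq_eq_abs]
      exact Real.sqrt_le_sqrt (by nlinarith [sq_nonneg (2*t - η^2)])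
    calc 2*γ*|η| = |2*γ*η| := by rw [abs_mul, _root_.abs_of_pos (show (0:ℝ) < 2*γ by positivity)]
    _ ≤ r := this
  rcases le_or_gt (4*t) (η^2) with hA | hB
  · -- η² ≥ 4t, r ≥ η²/2
    have hr2 : η^2/2 ≤ r := by
      have : η^2/2 ≤ |2*t - η^2| := by
        rw [abs_sub_comm, _root_.abs_of_nonneg (by linarith)]; linarith
      linarith
    rcases le_or_gt (η^2) 1 with h1 | h1
    · nlinarith
    · nlinarith
  · rcases le_or_gt (η^2) t with h1 | h1
    · -- r ≥ 2t - η² ≥ t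
      have : t ≤ |2*t - η^2| := by
        rw [_root_.abs_of_nonneg (by linarith)]; linarith
      nlinarith [sq_nonneg η]
    · -- t ≤ η² ≤ 4t ≤ 8, |η| ≤ 3
      have hη8 : η^2 ≤ 8 := by linarith
      have habs : |η| ≤ 3 := by
        have := abs_nonneg η
        nlinarith [_root_.sq_abs η]
      have hηabs : η^2 ≤ 3*|η| := by nlinarith [_root_.sq_abs η, abs_nonneg η]
      have h27 : t * (1+η^2) ≤ 27 * |η| := by nlinarith [abs_nonneg η]
      have : 27 * |η| ≤ (27/(2*γ)) * r := by
        have := him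
        have h2g : 0 < 2*γ := by linarith
        rw [div_mul_eq_mul_div, le_div_iff₀ h2g]
        nlinarith
      have hCge : 27/(2*γ) ≤ C := by
        rw [hCdef]
        rw [div_le_iff₀ (by linarith)]
        have : 100 * (1+1/γ) * (2*γ) = 200*γ + 200 := by field_simp; ring
        rw [this]; nlinarith
      nlinarith

lemma term_bound (γ : ℝ) (hγ : 0 < γ) (t η : ℝ) (ht0 : 0 ≤ t) (ht2 : t ≤ 2) :
    ‖(t : ℂ) / (2 * (t : ℂ) - (η : ℂ) ^ 2 + 2 * Complex.I * (γ : ℂ) * (η : ℂ))‖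
      ≤ (100 * (1 + 1/γ)) / (1 + η ^ 2) := by
  set C := 100 * (1 + 1/γ) with hCdef
  have hCpos : 0 < C := by positivity
  have h1η : (0:ℝ) < 1 + η^2 := by positivity
  set z : ℂ := 2 * (t : ℂ) - (η : ℂ) ^ 2 + 2 * Complex.I * (γ : ℂ) * (η : ℂ) with hz
  have hzre : z.re = 2*t - η^2 := by simp [hz, pow_two]
  have hzim : z.im = 2*γ*η := by simp [hz, pow_two]
  have hnormz : ‖z‖ = Real.sqrt ((2*t - η^2)^2 + (2*γ*η)^2) := by
    rw [Complex.norm_def, Complex.normSq_apply, hzre, hzim]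
    ring_nf
  have key := key_real γ hγ t η ht0 ht2
  rw [← hCdef] at key
  rcases eq_or_lt_of_le ht0 with h0 | h0
  · simp [← h0]
    positivity
  · have hzpos : 0 < ‖z‖ := by
      rw [hnormz]
      apply Real.sqrt_pos.mpr
      rcases eq_or_ne η 0 with rfl | hη
      · have h2t : (0:ℝ) < 2*t - 0^2 := by nlinarith
        nlinarith [sq_nonneg (2*γ*(0:ℝ)), sq_nonneg (2*t - (0:ℝ)^2), mul_pos h2t h2t]
      · have : (2*γ*η)^2 > 0 := by positivity
        nlinarith [sq_nonneg (2*t - η^2)]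
    rw [norm_div, div_le_div_iff₀ hzpos h1η]
    have hnt : ‖(t:ℂ)‖ = t := by
      rw [Complex.norm_real, Real.norm_eq_abs, _root_.abs_of_nonneg ht0]
    rw [hnt, hnormz]
    linarith [key]

/-- There is `C > 0` (depending only on `γ`) with
`|a_n(η)| ≤ C/(1+η²)` for all `n ≥ 1` and all real `η`, where
`a_n(η) = (1/(n+1)) ∑_{k ∈ T̂_n} 2 sin²(πk)/(4 sin²(πk) − η² + 2iγη)`. -/
theorem stmt1 (γ : ℝ) (hγ : 0 < γ) :
    ∃ C : ℝ, 0 < C ∧ ∀ n : ℕ, 1 ≤ n → ∀ η : ℝ,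
      ‖(1 / ((n : ℂ) + 1)) * ∑ j ∈ Finset.range (n + 1),
          (2 * ((Real.sin (Real.pi * j / (n + 1)) : ℝ) : ℂ) ^ 2) /
            (4 * ((Real.sin (Real.pi * j / (n + 1)) : ℝ) : ℂ) ^ 2 - (η : ℂ) ^ 2
              + 2 * Complex.I * (γ : ℂ) * (η : ℂ))‖
        ≤ C / (1 + η ^ 2) := by
  refine ⟨100 * (1 + 1/γ), by positivity, ?_⟩
  intro n hn η
  set C := 100 * (1 + 1/γ) with hC
  have hterm : ∀ j ∈ Finset.range (n+1),
      ‖(2 * ((Real.sin (Real.pi * j / (n + 1)) : ℝ) : ℂ) ^ 2) /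
        (4 * ((Real.sin (Real.pi * j / (n + 1)) : ℝ) : ℂ) ^ 2 - (η : ℂ) ^ 2
          + 2 * Complex.I * (γ : ℂ) * (η : ℂ))‖ ≤ C / (1 + η ^ 2) := by
    intro j _
    have hb := term_bound γ hγ (2 * (Real.sin (Real.pi * j / (n+1)))^2) η
      (by positivity) (by nlinarith [Real.sin_sq_le_one (Real.pi * j / (n+1))])
    rw [← hC] at hb
    convert hb using 3 <;> push_cast <;> ring
  rw [norm_mul]
  have hn1 : ‖(1 / ((n : ℂ) + 1))‖ = 1/((n:ℝ)+1) := by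
    rw [norm_div, norm_one]
    congr 1
    have : ((n:ℂ)+1) = (((n:ℝ)+1 : ℝ) : ℂ) := by push_cast; ring
    rw [this, Complex.norm_real, Real.norm_eq_abs, _root_.abs_of_nonneg (by positivity)]
  rw [hn1]
  have hsum : ‖∑ j ∈ Finset.range (n + 1),
          (2 * ((Real.sin (Real.pi * j / (n + 1)) : ℝ) : ℂ) ^ 2) /
            (4 * ((Real.sin (Real.pi * j / (n + 1)) : ℝ) : ℂ) ^ 2 - (η : ℂ) ^ 2
              + 2 * Complex.I * (γ : ℂ) * (η : ℂ))‖ ≤ ((n:ℝ)+1) * (C/(1+η^2)) := by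
    refine (norm_sum_le _ _).trans ?_
    refine (Finset.sum_le_sum hterm).trans_eq ?_
    rw [Finset.sum_const, Finset.card_range, nsmul_eq_mul]
    push_cast; ring
  have hpos : (0:ℝ) < (n:ℝ)+1 := by positivity
  calc (1/((n:ℝ)+1)) * ‖∑ j ∈ Finset.range (n + 1),
          (2 * ((Real.sin (Real.pi * j / (n + 1)) : ℝ) : ℂ) ^ 2) /
            (4 * ((Real.sin (Real.pi * j / (n + 1)) : ℝ) : ℂ) ^ 2 - (η : ℂ) ^ 2
              + 2 * Complex.I * (γ : ℂ) * (η : ℂ))‖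
      ≤ (1/((n:ℝ)+1)) * (((n:ℝ)+1) * (C/(1+η^2))) :=
        mul_le_mul_of_nonneg_left hsum (by positivity)
    _ = C/(1+η^2) := by field_simp
end

section
/- There is a constant C > 0 (depending only on γ) such that for all n ≥ 1 and η ∈ ℝ with 0 < η² < 8: (1/(n+1)) Σ_{k ∈ T̂_n} |sin(πk)| / (|η| + sin²(πk)) ≤ C log(1 + 1/|η|). -/
open Finset

set_option maxHeartbeats 1000000 in
/-- There is `C > 0` such that for all `n ≥ 1` and `0 < η² < 8`,
`(1/(n+1)) ∑_{k ∈ T̂_n} |sin(πk)|/(|η| + sin²(πk)) ≤ C log(1 + 1/|η|)`. -/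
theorem stmt4 (γ : ℝ) (hγ : 0 < γ) :
    ∃ C : ℝ, 0 < C ∧ ∀ n : ℕ, 1 ≤ n → ∀ η : ℝ, 0 < η ^ 2 → η ^ 2 < 8 →
      (1 / ((n : ℝ) + 1)) * ∑ j ∈ Finset.range (n + 1),
          |Real.sin (Real.pi * j / (n + 1))| /
            (|η| + Real.sin (Real.pi * j / (n + 1)) ^ 2)
        ≤ C * Real.log (1 + 1 / |η|) := by
  refine ⟨4, by norm_num, ?_⟩
  intro n hn η hη1 hη2
  have hπ := Real.pi_pos
  set N : ℝ := (n : ℝ) + 1 with hNdef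
  have hNpos : (0:ℝ) < N := by positivity
  have hε : 0 < |η| := by
    rcases eq_or_ne η 0 with h | h
    · simp [h] at hη1
    · exact abs_pos.mpr h
  set ε : ℝ := |η| with hεdef
  have hε4 : ε < 4 := by
    nlinarith [sq_abs η, abs_nonneg η]
  have hq : 0 < Real.sqrt ε := Real.sqrt_pos.mpr hε
  have hqsq : Real.sqrt ε ^ 2 = ε := Real.sq_sqrt hε.le
  have hq2 : Real.sqrt ε ≤ 2 := by
    nlinarith [hq, hqsq]
  set t : ℝ := N * Real.sqrt ε with htdef
  have htpos : 0 < t := by positivity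
  set φ : ℕ → ℝ := fun m => N / (t + m) with hφdef
  have hφpos : ∀ m : ℕ, 0 < φ m := by
    intro m
    have : (0:ℝ) ≤ (m:ℝ) := Nat.cast_nonneg m
    exact div_pos hNpos (by linarith)
  have hφanti : ∀ a b : ℕ, a ≤ b → φ b ≤ φ a := by
    intro a b hab
    have ha : (0:ℝ) ≤ (a:ℝ) := Nat.cast_nonneg a
    have hab' : (a:ℝ) ≤ (b:ℝ) := Nat.cast_le.mpr hab
    exact div_le_div_of_nonneg_left hNpos.le (by linarith) (by linarith)
  -- pointwise bound for j with 1 ≤ j ≤ n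
  have key : ∀ j : ℕ, 1 ≤ j → j ≤ n →
      |Real.sin (Real.pi * j / N)| / (ε + Real.sin (Real.pi * j / N) ^ 2)
        ≤ φ (min j (n + 1 - j)) := by
    intro j hj1 hjn
    set s : ℝ := Real.sin (Real.pi * j / N) with hsdef
    have hx0 : 0 ≤ Real.pi * j / N := by positivity
    have hjN : (j : ℝ) ≤ N := by
      have : (j:ℝ) ≤ (n:ℝ) := Nat.cast_le.mpr hjn
      simp only [hNdef]; linarith
    have hxpi : Real.pi * j / N ≤ Real.pi := by
      rw [div_le_iff₀ hNpos]
      nlinarith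
    have hs0 : 0 ≤ s := Real.sin_nonneg_of_nonneg_of_le_pi hx0 hxpi
    have habs : |s| = s := abs_of_nonneg hs0
    set m : ℕ := min j (n + 1 - j) with hmdef
    have hmj : (m:ℝ) ≤ (j:ℝ) := Nat.cast_le.mpr (min_le_left _ _)
    have hmr : (m:ℝ) ≤ N - (j:ℝ) := by
      have h1 : m ≤ n + 1 - j := min_le_right _ _
      have h2 : (m:ℝ) ≤ ((n+1-j : ℕ) : ℝ) := Nat.cast_le.mpr h1
      have h3 : ((n+1-j : ℕ) : ℝ) = N - (j:ℝ) := by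
        have : j ≤ n + 1 := by omega
        rw [Nat.cast_sub this]
        push_cast [hNdef]
        ring
      linarith [h2, h3.le, h3.ge]
    have hm0 : (0:ℝ) ≤ (m:ℝ) := Nat.cast_nonneg m
    -- lower bound on s : s ≥ 2 m / N
    have hslb : 2 * (m:ℝ) / N ≤ s := by
      rcases le_total (2 * (j:ℝ)) N with hcase | hcase
      · -- π j / N ≤ π/2, use Jordan
        have hle : Real.pi * j / N ≤ Real.pi / 2 := by
          rw [div_le_div_iff₀ hNpos (by norm_num : (0:ℝ) < 2)]
          nlinarith
        have hJ := Real.mul_le_sin hx0 hle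
        have heq : 2 / Real.pi * (Real.pi * j / N) = 2 * (j:ℝ) / N := by
          field_simp
          all_goals ring
        rw [heq] at hJ
        have h2 : 2 * (m:ℝ) / N ≤ 2 * (j:ℝ) / N := by
          gcongr
        linarith
      · -- use sin(π - x)
        have hx0' : 0 ≤ Real.pi - Real.pi * j / N := by
          rw [sub_nonneg]; exact hxpi
        have hle : Real.pi - Real.pi * j / N ≤ Real.pi / 2 := by
          have h : Real.pi / 2 ≤ Real.pi * j / N := by
            rw [div_le_div_iff₀ (by norm_num : (0:ℝ) < 2) hNpos]
            nlinarith
          linarith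
        have hJ := Real.mul_le_sin hx0' hle
        rw [Real.sin_pi_sub] at hJ
        have heq : 2 / Real.pi * (Real.pi - Real.pi * j / N) = 2 * (N - (j:ℝ)) / N := by
          field_simp
          all_goals ring
        rw [heq] at hJ
        have h2 : 2 * (m:ℝ) / N ≤ 2 * (N - (j:ℝ)) / N := by
          gcongr
        linarith
    -- main chain
    have hden1 : 0 < ε + s ^ 2 := by positivity
    have hden2 : 0 < 2 * Real.sqrt ε + s := by positivity
    have amgm : 2 * Real.sqrt ε * s ≤ ε + s ^ 2 := by
      nlinarith [sq_nonneg (Real.sqrt ε - s), hqsq]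
    have step1 : s / (ε + s ^ 2) ≤ 2 / (2 * Real.sqrt ε + s) := by
      rw [div_le_div_iff₀ hden1 hden2]
      nlinarith [amgm]
    have hden3 : 0 < t + (m:ℝ) := by linarith
    have step2 : 2 / (2 * Real.sqrt ε + s) ≤ N / (t + (m:ℝ)) := by
      rw [div_le_div_iff₀ hden2 hden3]
      have hNs : 2 * (m:ℝ) ≤ N * s := by
        have := (div_le_iff₀ hNpos).mp hslb
        linarith
      have hexp : N * (2 * Real.sqrt ε + s) = 2 * t + N * s := by
        rw [htdef]; ring
      rw [hexp]
      linarith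
    rw [habs]
    calc s / (ε + s ^ 2) ≤ 2 / (2 * Real.sqrt ε + s) := step1
      _ ≤ N / (t + (m:ℝ)) := step2
  -- rewrite sum dropping j = 0
  have hsum0 : ∑ j ∈ Finset.range (n + 1),
      |Real.sin (Real.pi * j / N)| / (ε + Real.sin (Real.pi * j / N) ^ 2)
      = ∑ i ∈ Finset.range n,
        |Real.sin (Real.pi * (i+1 : ℕ) / N)| / (ε + Real.sin (Real.pi * (i+1 : ℕ) / N) ^ 2) := by
    rw [Finset.sum_range_succ']
    simp
  -- bound each term by φ (i+1) + φ (n - i)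
  have hbound : ∀ i ∈ Finset.range n,
      |Real.sin (Real.pi * (i+1 : ℕ) / N)| / (ε + Real.sin (Real.pi * (i+1 : ℕ) / N) ^ 2)
        ≤ φ (i + 1) + φ (n - i) := by
    intro i hi
    have hi' : i < n := Finset.mem_range.mp hi
    have h1 := key (i+1) (by omega) (by omega)
    have hmin : min (i+1) (n + 1 - (i+1)) = min (i+1) (n-i) := by omega
    rw [hmin] at h1
    refine h1.trans ?_
    rcases min_choice (i+1) (n-i) with h | h
    · rw [h]
      have := (hφpos (n - i)).le
      linarith
    · rw [h]
      have := (hφpos (i+1)).le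
      linarith
  -- sum of reflected part
  have hreflect : ∑ i ∈ Finset.range n, φ (n - i) = ∑ i ∈ Finset.range n, φ (i + 1) := by
    rw [← Finset.sum_range_reflect (fun i => φ (i + 1)) n]
    apply Finset.sum_congr rfl
    intro i hi
    have hi' : i < n := Finset.mem_range.mp hi
    congr 1
    omega
  -- telescoping estimate
  have htel : ∑ i ∈ Finset.range n, φ (i + 1) ≤ N * (Real.log (t + n) - Real.log t) := by
    have := Finset.sum_range_sub (fun i => N * Real.log (t + i)) n
    simp only [Nat.cast_zero, add_zero] at this
    rw [mul_sub, ← this]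
    apply Finset.sum_le_sum
    intro i hi
    have hti : (0:ℝ) < t + (i:ℝ) := by positivity
    have hti1 : (0:ℝ) < t + (i:ℝ) + 1 := by linarith
    have hlog : 1 / (t + (i:ℝ) + 1) ≤ Real.log (t + (i:ℝ) + 1) - Real.log (t + (i:ℝ)) := by
      have h := Real.log_le_sub_one_of_pos (div_pos hti hti1)
      rw [Real.log_div (ne_of_gt hti) (ne_of_gt hti1)] at h
      have h2 : (t + (i:ℝ)) / (t + (i:ℝ) + 1) = 1 - 1 / (t + (i:ℝ) + 1) := by
        field_simp
        ring
      rw [h2] at h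
      linarith
    simp only [hφdef]
    have hcast : ((i+1 : ℕ) : ℝ) = (i:ℝ) + 1 := by push_cast; ring
    rw [hcast]
    have goal_eq : t + ((i:ℝ) + 1) = t + (i:ℝ) + 1 := by ring
    rw [goal_eq]
    calc N / (t + (i:ℝ) + 1) = N * (1 / (t + (i:ℝ) + 1)) := (mul_one_div N _).symm
      _ ≤ N * (Real.log (t + (i:ℝ) + 1) - Real.log (t + (i:ℝ))) :=
          mul_le_mul_of_nonneg_left hlog hNpos.le
      _ = N * Real.log (t + (i:ℝ) + 1) - N * Real.log (t + (i:ℝ)) := by ring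
  -- log bound
  have hlogq : Real.log (t + n) - Real.log t ≤ Real.log (1 + 1 / Real.sqrt ε) := by
    rw [← Real.log_div (by positivity) (ne_of_gt htpos)]
    apply Real.log_le_log (by positivity)
    rw [div_le_iff₀ htpos]
    have hnN : (n:ℝ) ≤ N := by simp only [hNdef]; linarith
    have : (1 + 1 / Real.sqrt ε) * t = t + N := by
      field_simp [htdef]
      ring
    rw [this]
    linarith
  have hlog2 : Real.log (1 + 1 / Real.sqrt ε) ≤ 2 * Real.log (1 + 1 / ε) := by
    have h1 : (0:ℝ) < 1 + 1 / ε := by positivity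
    have h2 : 1 + 1 / Real.sqrt ε ≤ (1 + 1 / ε) ^ 2 := by
      have e1 : 1 / Real.sqrt ε ≤ 2 / ε := by
        rw [div_le_div_iff₀ hq hε]
        nlinarith
      have e2 : (1 + 1/ε)^2 = 1 + 2/ε + 1/ε^2 := by field_simp; ring
      have e3 : (0:ℝ) ≤ 1 / ε^2 := by positivity
      nlinarith
    calc Real.log (1 + 1 / Real.sqrt ε) ≤ Real.log ((1 + 1/ε)^2) :=
          Real.log_le_log (by positivity) h2
      _ = 2 * Real.log (1 + 1/ε) := by
          rw [Real.log_pow]; push_cast; ring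
  -- put everything together
  have hfinal : ∑ j ∈ Finset.range (n + 1),
      |Real.sin (Real.pi * j / N)| / (ε + Real.sin (Real.pi * j / N) ^ 2)
      ≤ N * (4 * Real.log (1 + 1 / ε)) := by
    rw [hsum0]
    calc ∑ i ∈ Finset.range n,
          |Real.sin (Real.pi * (i+1 : ℕ) / N)| / (ε + Real.sin (Real.pi * (i+1 : ℕ) / N) ^ 2)
        ≤ ∑ i ∈ Finset.range n, (φ (i + 1) + φ (n - i)) := Finset.sum_le_sum hbound
      _ = ∑ i ∈ Finset.range n, φ (i + 1) + ∑ i ∈ Finset.range n, φ (n - i) :=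
          Finset.sum_add_distrib
      _ = 2 * ∑ i ∈ Finset.range n, φ (i + 1) := by rw [hreflect]; ring
      _ ≤ 2 * (N * (Real.log (t + n) - Real.log t)) := by
          have hsnn : (0:ℝ) ≤ ∑ i ∈ Finset.range n, φ (i+1) :=
            Finset.sum_nonneg (fun i _ => (hφpos _).le)
          linarith [htel]
      _ ≤ 2 * (N * (2 * Real.log (1 + 1 / ε))) := by
          have := hlogq.trans hlog2
          nlinarith [hNpos]
      _ = N * (4 * Real.log (1 + 1 / ε)) := by ring
  rw [div_mul_eq_mul_div, one_mul, div_le_iff₀ hNpos]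
  calc ∑ j ∈ Finset.range (n + 1),
        |Real.sin (Real.pi * j / N)| / (ε + Real.sin (Real.pi * j / N) ^ 2)
      ≤ N * (4 * Real.log (1 + 1 / ε)) := hfinal
    _ = 4 * Real.log (1 + 1 / ε) * N := by ring
end

section
/- There exists a constant C > 0 depending only on γ such that for all t ≥ 0 and all n ≥ 1: (1/(n+1)) Σ_{k ∈ T̂_n} sin²(πk) · exp(−2t sin²(πk)/γ) ≤ C/(1 + t)^{3/2}. -/
open Finset

section auxStmt7

open Real MeasureTheory

private lemma aux_gauss_sum (a : ℝ) (ha : 0 < a) (N : ℕ) :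
    ∑ i ∈ Finset.range N, Real.exp (-a * ((i : ℝ) + 1) ^ 2) ≤ Real.sqrt (Real.pi / a) / 2 := by
  have hc : Continuous fun x : ℝ => Real.exp (-a * x ^ 2) :=
    (continuous_const.mul (continuous_pow 2)).rexp
  have step : ∀ i ∈ Finset.range N,
      Real.exp (-a * ((i : ℝ) + 1) ^ 2) ≤ ∫ x in (i : ℝ)..((i : ℝ) + 1), Real.exp (-a * x ^ 2) := by
    intro i _
    have h0 : Real.exp (-a * ((i : ℝ) + 1) ^ 2)
        = ∫ _x in (i : ℝ)..((i : ℝ) + 1), Real.exp (-a * ((i : ℝ) + 1) ^ 2) := by simp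
    rw [h0]
    apply intervalIntegral.integral_mono_on (by linarith) (intervalIntegrable_const)
      (hc.intervalIntegrable _ _)
    intro x hx
    have hx1 := hx.1
    have hx2 := hx.2
    have hi : (0 : ℝ) ≤ (i : ℝ) := Nat.cast_nonneg i
    have hx0 : (0:ℝ) ≤ x := le_trans hi hx1
    have hsq : x ^ 2 ≤ ((i : ℝ) + 1) ^ 2 := pow_le_pow_left₀ hx0 hx2 2
    apply Real.exp_le_exp.2
    nlinarith [ha.le]
  calc ∑ i ∈ Finset.range N, Real.exp (-a * ((i : ℝ) + 1) ^ 2)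
      ≤ ∑ i ∈ Finset.range N, ∫ x in (i : ℝ)..((i : ℝ) + 1), Real.exp (-a * x ^ 2) :=
        Finset.sum_le_sum step
    _ = ∫ x in (0 : ℝ)..(N : ℝ), Real.exp (-a * x ^ 2) := by
        have := intervalIntegral.sum_integral_adjacent_intervals
          (a := fun k : ℕ => (k : ℝ)) (μ := MeasureTheory.volume)
          (f := fun x => Real.exp (-a * x ^ 2)) (n := N)
          (fun k _ => hc.intervalIntegrable _ _)
        push_cast at this
        exact this
    _ ≤ ∫ x in Set.Ioi (0 : ℝ), Real.exp (-a * x ^ 2) := by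
        rw [intervalIntegral.integral_of_le (by positivity)]
        exact MeasureTheory.setIntegral_mono_set ((integrable_exp_neg_mul_sq ha).integrableOn)
          (Filter.Eventually.of_forall fun x => (Real.exp_pos _).le)
          (HasSubset.Subset.eventuallyLE Set.Ioc_subset_Ioi_self)
    _ = Real.sqrt (Real.pi / a) / 2 := integral_gaussian_Ioi a

private lemma aux_mul_exp (y : ℝ) : y * Real.exp (-y) ≤ (Real.exp 1)⁻¹ := by
  have h := Real.add_one_le_exp (y - 1)
  have h2 : Real.exp (y - 1) * Real.exp 1 = Real.exp y := by
    rw [← Real.exp_add]; ring_nf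
  have he := Real.exp_pos 1
  have hey := Real.exp_pos y
  have h3 : y * Real.exp 1 ≤ Real.exp y := by nlinarith
  rw [Real.exp_neg, ← div_eq_mul_inv, inv_eq_one_div, div_le_div_iff₀ hey he]
  linarith

private lemma aux_term (γ t s : ℝ) (hγ : 0 < γ) (ht : 0 < t) :
    s ^ 2 * Real.exp (-(2 * t * s ^ 2) / γ)
      ≤ (γ / (Real.exp 1 * t)) * Real.exp (-(t * s ^ 2) / γ) := by
  have hsplit : Real.exp (-(2 * t * s ^ 2) / γ)
      = Real.exp (-(t * s ^ 2) / γ) * Real.exp (-(t * s ^ 2) / γ) := by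
    rw [← Real.exp_add]; ring_nf
  have hy : s ^ 2 * Real.exp (-(t * s ^ 2) / γ) ≤ γ / (Real.exp 1 * t) := by
    have key := aux_mul_exp (t * s ^ 2 / γ)
    have harg : -(t * s ^ 2) / γ = -(t * s ^ 2 / γ) := by ring
    have heq : ∀ E : ℝ, s ^ 2 * E = (γ / t) * ((t * s ^ 2 / γ) * E) := by
      intro E; field_simp
    calc s ^ 2 * Real.exp (-(t * s ^ 2) / γ)
        = (γ / t) * ((t * s ^ 2 / γ) * Real.exp (-(t * s ^ 2 / γ))) := by
          rw [harg]; exact heq _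
      _ ≤ (γ / t) * (Real.exp 1)⁻¹ :=
          mul_le_mul_of_nonneg_left key (by positivity)
      _ = γ / (Real.exp 1 * t) := by
          rw [mul_comm (Real.exp 1) t, ← div_div, div_eq_mul_inv (γ / t)]
  calc s ^ 2 * Real.exp (-(2 * t * s ^ 2) / γ)
      = (s ^ 2 * Real.exp (-(t * s ^ 2) / γ)) * Real.exp (-(t * s ^ 2) / γ) := by
        rw [hsplit]; ring
    _ ≤ (γ / (Real.exp 1 * t)) * Real.exp (-(t * s ^ 2) / γ) :=
        mul_le_mul_of_nonneg_right hy (Real.exp_pos _).le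

private lemma aux_sin_min (n i : ℕ) (hi : i < n) :
    2 * ((i : ℝ) + 1) / ((n : ℝ) + 1) ≤ Real.sin (Real.pi * ((i : ℝ) + 1) / ((n : ℝ) + 1)) ∨
    2 * ((n : ℝ) - (i : ℝ)) / ((n : ℝ) + 1) ≤ Real.sin (Real.pi * ((i : ℝ) + 1) / ((n : ℝ) + 1)) := by
  have hM : (0 : ℝ) < (n : ℝ) + 1 := by positivity
  have hpi := Real.pi_pos
  have hiln : (i : ℝ) < (n : ℝ) := by exact_mod_cast hi
  rcases le_total ((i : ℝ) + 1) ((n : ℝ) - i) with hc | hc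
  · left
    have h1 : 0 ≤ Real.pi * ((i : ℝ) + 1) / ((n : ℝ) + 1) := by positivity
    have h2 : Real.pi * ((i : ℝ) + 1) / ((n : ℝ) + 1) ≤ Real.pi / 2 := by
      rw [div_le_div_iff₀ hM two_pos]
      nlinarith
    have hs := Real.mul_le_sin h1 h2
    calc 2 * ((i : ℝ) + 1) / ((n : ℝ) + 1)
        = 2 / Real.pi * (Real.pi * ((i : ℝ) + 1) / ((n : ℝ) + 1)) := by
          field_simp
      _ ≤ _ := hs
  · right
    have hn0 : (0 : ℝ) ≤ (n : ℝ) - i := by linarith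
    have h1 : 0 ≤ Real.pi * ((n : ℝ) - i) / ((n : ℝ) + 1) :=
      div_nonneg (mul_nonneg hpi.le hn0) hM.le
    have h2 : Real.pi * ((n : ℝ) - i) / ((n : ℝ) + 1) ≤ Real.pi / 2 := by
      rw [div_le_div_iff₀ hM two_pos]
      nlinarith
    have hs := Real.mul_le_sin h1 h2
    have hangle : Real.pi * ((i : ℝ) + 1) / ((n : ℝ) + 1)
        = Real.pi - Real.pi * ((n : ℝ) - i) / ((n : ℝ) + 1) := by
      field_simp
      ring
    rw [hangle, Real.sin_pi_sub]
    calc 2 * ((n : ℝ) - i) / ((n : ℝ) + 1)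
        = 2 / Real.pi * (Real.pi * ((n : ℝ) - i) / ((n : ℝ) + 1)) := by
          field_simp
      _ ≤ _ := hs

private lemma aux_reflect (a : ℝ) (n : ℕ) :
    ∑ i ∈ Finset.range n, Real.exp (-a * ((n : ℝ) - (i : ℝ)) ^ 2)
      = ∑ i ∈ Finset.range n, Real.exp (-a * ((i : ℝ) + 1) ^ 2) := by
  have h := Finset.sum_range_reflect (fun i : ℕ => Real.exp (-a * ((i : ℝ) + 1) ^ 2)) n
  rw [← h]
  apply Finset.sum_congr rfl
  intro i hi
  have hin : i < n := Finset.mem_range.mp hi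
  have h1 : (n - 1 - i : ℕ) = n - (i + 1) := by omega
  congr 1
  rw [h1, Nat.cast_sub (by omega : i + 1 ≤ n)]
  push_cast
  ring

private lemma aux_main_sum (γ t : ℝ) (hγ : 0 < γ) (ht : 1 < t) (n : ℕ) :
    ∑ j ∈ Finset.range (n + 1),
        Real.sin (Real.pi * j / ((n : ℝ) + 1)) ^ 2 *
          Real.exp (-(2 * t * Real.sin (Real.pi * j / ((n : ℝ) + 1)) ^ 2) / γ)
      ≤ (γ / (Real.exp 1 * t)) * Real.sqrt (Real.pi / (4 * t / (γ * ((n : ℝ) + 1) ^ 2))) := by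
  have ht0 : (0 : ℝ) < t := lt_trans one_pos ht
  set a : ℝ := 4 * t / (γ * ((n : ℝ) + 1) ^ 2) with ha
  have hapos : 0 < a := by positivity
  have hM : (0 : ℝ) < (n : ℝ) + 1 := by positivity
  rw [Finset.sum_range_succ']
  have h0 : Real.sin (Real.pi * ((0 : ℕ) : ℝ) / ((n : ℝ) + 1)) = 0 := by
    norm_num
  rw [h0]
  have hbound : ∀ i ∈ Finset.range n,
      Real.sin (Real.pi * ((i + 1 : ℕ) : ℝ) / ((n : ℝ) + 1)) ^ 2 *
          Real.exp (-(2 * t * Real.sin (Real.pi * ((i + 1 : ℕ) : ℝ) / ((n : ℝ) + 1)) ^ 2) / γ)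
        ≤ (γ / (Real.exp 1 * t)) *
            (Real.exp (-a * ((i : ℝ) + 1) ^ 2) + Real.exp (-a * ((n : ℝ) - (i : ℝ)) ^ 2)) := by
    intro i hi
    have hin : i < n := Finset.mem_range.mp hi
    have hcast : ((i + 1 : ℕ) : ℝ) = (i : ℝ) + 1 := by push_cast; ring
    rw [hcast]
    set s := Real.sin (Real.pi * ((i : ℝ) + 1) / ((n : ℝ) + 1)) with hs
    have hterm := aux_term γ t s hγ ht0
    have hexp : Real.exp (-(t * s ^ 2) / γ)
        ≤ Real.exp (-a * ((i : ℝ) + 1) ^ 2) + Real.exp (-a * ((n : ℝ) - (i : ℝ)) ^ 2) := by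
      have harg : -(t * s ^ 2) / γ = -(t * s ^ 2 / γ) := by ring
      rcases aux_sin_min n i hin with h | h
      · have hge : (2 * ((i : ℝ) + 1) / ((n : ℝ) + 1)) ^ 2 ≤ s ^ 2 :=
          pow_le_pow_left₀ (by positivity) h 2
        have heq : t * (2 * ((i : ℝ) + 1) / ((n : ℝ) + 1)) ^ 2 / γ = a * ((i : ℝ) + 1) ^ 2 := by
          rw [ha]; field_simp; ring
        have hle : a * ((i : ℝ) + 1) ^ 2 ≤ t * s ^ 2 / γ := by
          rw [← heq]
          gcongr
        calc Real.exp (-(t * s ^ 2) / γ) ≤ Real.exp (-a * ((i : ℝ) + 1) ^ 2) := by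
              apply Real.exp_le_exp.2
              rw [harg]
              nlinarith
          _ ≤ _ := le_add_of_nonneg_right (Real.exp_pos _).le
      · have hiln : (i : ℝ) < (n : ℝ) := by exact_mod_cast hin
        have hge : (2 * ((n : ℝ) - (i : ℝ)) / ((n : ℝ) + 1)) ^ 2 ≤ s ^ 2 := by
          apply pow_le_pow_left₀ _ h 2
          have : (0:ℝ) ≤ (n : ℝ) - i := by linarith
          positivity
        have heq : t * (2 * ((n : ℝ) - (i : ℝ)) / ((n : ℝ) + 1)) ^ 2 / γ
            = a * ((n : ℝ) - (i : ℝ)) ^ 2 := by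
          rw [ha]; field_simp; ring
        have hle : a * ((n : ℝ) - (i : ℝ)) ^ 2 ≤ t * s ^ 2 / γ := by
          rw [← heq]
          gcongr
        calc Real.exp (-(t * s ^ 2) / γ) ≤ Real.exp (-a * ((n : ℝ) - (i : ℝ)) ^ 2) := by
              apply Real.exp_le_exp.2
              rw [harg]
              nlinarith
          _ ≤ _ := le_add_of_nonneg_left (Real.exp_pos _).le
    calc s ^ 2 * Real.exp (-(2 * t * s ^ 2) / γ)
        ≤ (γ / (Real.exp 1 * t)) * Real.exp (-(t * s ^ 2) / γ) := hterm
      _ ≤ (γ / (Real.exp 1 * t)) *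
            (Real.exp (-a * ((i : ℝ) + 1) ^ 2) + Real.exp (-a * ((n : ℝ) - (i : ℝ)) ^ 2)) :=
          mul_le_mul_of_nonneg_left hexp (by positivity)
  have hg := aux_gauss_sum a hapos n
  calc (∑ i ∈ Finset.range n,
          Real.sin (Real.pi * ((i + 1 : ℕ) : ℝ) / ((n : ℝ) + 1)) ^ 2 *
            Real.exp (-(2 * t * Real.sin (Real.pi * ((i + 1 : ℕ) : ℝ) / ((n : ℝ) + 1)) ^ 2) / γ))
        + (0 : ℝ) ^ 2 * Real.exp (-(2 * t * (0 : ℝ) ^ 2) / γ)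
      = ∑ i ∈ Finset.range n,
          Real.sin (Real.pi * ((i + 1 : ℕ) : ℝ) / ((n : ℝ) + 1)) ^ 2 *
            Real.exp (-(2 * t * Real.sin (Real.pi * ((i + 1 : ℕ) : ℝ) / ((n : ℝ) + 1)) ^ 2) / γ) := by
        norm_num
    _ ≤ ∑ i ∈ Finset.range n, (γ / (Real.exp 1 * t)) *
          (Real.exp (-a * ((i : ℝ) + 1) ^ 2) + Real.exp (-a * ((n : ℝ) - (i : ℝ)) ^ 2)) :=
        Finset.sum_le_sum hbound
    _ = (γ / (Real.exp 1 * t)) *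
          ((∑ i ∈ Finset.range n, Real.exp (-a * ((i : ℝ) + 1) ^ 2))
            + ∑ i ∈ Finset.range n, Real.exp (-a * ((n : ℝ) - (i : ℝ)) ^ 2)) := by
        rw [← Finset.mul_sum, Finset.sum_add_distrib]
    _ ≤ (γ / (Real.exp 1 * t)) * Real.sqrt (Real.pi / a) := by
        rw [aux_reflect]
        apply mul_le_mul_of_nonneg_left _ (by positivity)
        have := add_le_add hg hg
        linarith

end auxStmt7

/-- There is `C > 0` depending only on `γ` with
`(1/(n+1)) ∑_k sin²(πk) exp(−2t sin²(πk)/γ) ≤ C/(1+t)^{3/2}` for all `t ≥ 0`, `n ≥ 1`. -/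
theorem stmt7 (γ : ℝ) (hγ : 0 < γ) :
    ∃ C : ℝ, 0 < C ∧ ∀ t : ℝ, 0 ≤ t → ∀ n : ℕ, 1 ≤ n →
      (1 / ((n : ℝ) + 1)) * ∑ j ∈ Finset.range (n + 1),
          Real.sin (Real.pi * j / (n + 1)) ^ 2 *
            Real.exp (-(2 * t * Real.sin (Real.pi * j / (n + 1)) ^ 2) / γ)
        ≤ C / (1 + t) ^ ((3 : ℝ) / 2) := by
  refine ⟨4 * (1 + γ * Real.sqrt γ), by positivity, ?_⟩
  intro t ht n hn
  have hM : (0 : ℝ) < (n : ℝ) + 1 := by positivity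
  have hRpos : (0 : ℝ) < (1 + t) ^ ((3 : ℝ) / 2) := Real.rpow_pos_of_pos (by linarith) _
  have hg0 : (0:ℝ) ≤ γ * Real.sqrt γ := mul_nonneg hγ.le (Real.sqrt_nonneg γ)
  have h24 : ((2 : ℝ)) ^ ((3 : ℝ) / 2) ≤ 4 := by
    calc ((2 : ℝ)) ^ ((3 : ℝ) / 2) ≤ (2 : ℝ) ^ ((2 : ℝ)) :=
          Real.rpow_le_rpow_of_exponent_le one_le_two (by norm_num)
      _ = 4 := by
          rw [show ((2 : ℝ) : ℝ) = ((2 : ℕ) : ℝ) by norm_num, Real.rpow_natCast]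
          norm_num
  rcases le_or_gt t 1 with hcase | hcase
  · -- small t : trivial bound by 1
    have htriv : (1 / ((n : ℝ) + 1)) * ∑ j ∈ Finset.range (n + 1),
        Real.sin (Real.pi * j / ((n : ℝ) + 1)) ^ 2 *
          Real.exp (-(2 * t * Real.sin (Real.pi * j / ((n : ℝ) + 1)) ^ 2) / γ) ≤ 1 := by
      have hterm1 : ∀ j ∈ Finset.range (n + 1),
          Real.sin (Real.pi * j / ((n : ℝ) + 1)) ^ 2 *
            Real.exp (-(2 * t * Real.sin (Real.pi * j / ((n : ℝ) + 1)) ^ 2) / γ) ≤ 1 := by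
        intro j _
        have h1 : Real.sin (Real.pi * j / ((n : ℝ) + 1)) ^ 2 ≤ 1 := Real.sin_sq_le_one _
        have h2 : Real.exp (-(2 * t * Real.sin (Real.pi * j / ((n : ℝ) + 1)) ^ 2) / γ) ≤ 1 := by
          rw [Real.exp_le_one_iff]
          have h3 : (0:ℝ) ≤ 2 * t * Real.sin (Real.pi * j / ((n : ℝ) + 1)) ^ 2 := by positivity
          exact div_nonpos_of_nonpos_of_nonneg (by linarith) hγ.le
        calc Real.sin (Real.pi * j / ((n : ℝ) + 1)) ^ 2 *
              Real.exp (-(2 * t * Real.sin (Real.pi * j / ((n : ℝ) + 1)) ^ 2) / γ)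
            ≤ 1 * 1 := mul_le_mul h1 h2 (Real.exp_pos _).le one_pos.le
          _ = 1 := by norm_num
      have hsum := Finset.sum_le_card_nsmul (Finset.range (n + 1)) _ 1 hterm1
      simp only [Finset.card_range, nsmul_eq_mul, mul_one] at hsum
      have : (1 / ((n : ℝ) + 1)) * ∑ j ∈ Finset.range (n + 1),
          Real.sin (Real.pi * j / ((n : ℝ) + 1)) ^ 2 *
            Real.exp (-(2 * t * Real.sin (Real.pi * j / ((n : ℝ) + 1)) ^ 2) / γ)
          ≤ (1 / ((n : ℝ) + 1)) * ((n : ℝ) + 1) := by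
        apply mul_le_mul_of_nonneg_left _ (by positivity)
        exact_mod_cast hsum
      rw [one_div_mul_cancel hM.ne'] at this
      exact this
    have hup : (1 + t) ^ ((3 : ℝ) / 2) ≤ 4 := by
      calc (1 + t) ^ ((3 : ℝ) / 2) ≤ (2 : ℝ) ^ ((3 : ℝ) / 2) :=
            Real.rpow_le_rpow (by linarith) (by linarith) (by norm_num)
        _ ≤ 4 := h24
    calc (1 / ((n : ℝ) + 1)) * ∑ j ∈ Finset.range (n + 1),
          Real.sin (Real.pi * j / ((n : ℝ) + 1)) ^ 2 *
            Real.exp (-(2 * t * Real.sin (Real.pi * j / ((n : ℝ) + 1)) ^ 2) / γ)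
        ≤ 1 := htriv
      _ ≤ 4 * (1 + γ * Real.sqrt γ) / (1 + t) ^ ((3 : ℝ) / 2) := by
          rw [le_div_iff₀ hRpos]
          nlinarith [hg0, hup]
  · -- large t
    have ht0 : (0 : ℝ) < t := lt_trans one_pos hcase
    have hst : (0 : ℝ) < Real.sqrt t := Real.sqrt_pos.2 ht0
    have he1 := Real.exp_pos 1
    have he2 : (2 : ℝ) ≤ Real.exp 1 := by
      have := Real.add_one_le_exp 1; linarith
    have hmain := aux_main_sum γ t hγ hcase n
    have hsq : Real.sqrt (Real.pi / (4 * t / (γ * ((n : ℝ) + 1) ^ 2)))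
        ≤ Real.sqrt γ * ((n : ℝ) + 1) / Real.sqrt t := by
      have hquot : Real.pi / (4 * t / (γ * ((n : ℝ) + 1) ^ 2)) ≤ γ * ((n : ℝ) + 1) ^ 2 / t := by
        have heq2 : Real.pi / (4 * t / (γ * ((n : ℝ) + 1) ^ 2))
            = Real.pi * (γ * ((n : ℝ) + 1) ^ 2) / (4 * t) := by
          field_simp
        rw [heq2, div_le_div_iff₀ (by positivity) (by positivity)]
        nlinarith [mul_le_mul_of_nonneg_right Real.pi_le_four
          (mul_nonneg (mul_nonneg hγ.le (sq_nonneg ((n : ℝ) + 1))) ht0.le)]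
      have heval : Real.sqrt (γ * ((n : ℝ) + 1) ^ 2 / t)
          = Real.sqrt γ * ((n : ℝ) + 1) / Real.sqrt t := by
        rw [Real.sqrt_div (by positivity), Real.sqrt_mul hγ.le, Real.sqrt_sq hM.le]
      rw [← heval]
      exact Real.sqrt_le_sqrt hquot
    have hchain : (1 / ((n : ℝ) + 1)) * ∑ j ∈ Finset.range (n + 1),
        Real.sin (Real.pi * j / ((n : ℝ) + 1)) ^ 2 *
          Real.exp (-(2 * t * Real.sin (Real.pi * j / ((n : ℝ) + 1)) ^ 2) / γ)
        ≤ γ * Real.sqrt γ / (Real.exp 1 * (t * Real.sqrt t)) := by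
      calc (1 / ((n : ℝ) + 1)) * ∑ j ∈ Finset.range (n + 1),
            Real.sin (Real.pi * j / ((n : ℝ) + 1)) ^ 2 *
              Real.exp (-(2 * t * Real.sin (Real.pi * j / ((n : ℝ) + 1)) ^ 2) / γ)
          ≤ (1 / ((n : ℝ) + 1)) * ((γ / (Real.exp 1 * t)) *
              Real.sqrt (Real.pi / (4 * t / (γ * ((n : ℝ) + 1) ^ 2)))) :=
            mul_le_mul_of_nonneg_left hmain (by positivity)
        _ ≤ (1 / ((n : ℝ) + 1)) * ((γ / (Real.exp 1 * t)) *
              (Real.sqrt γ * ((n : ℝ) + 1) / Real.sqrt t)) :=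
            mul_le_mul_of_nonneg_left
              (mul_le_mul_of_nonneg_left hsq (by positivity)) (by positivity)
        _ = γ * Real.sqrt γ / (Real.exp 1 * (t * Real.sqrt t)) := by
            field_simp
    have hpow : (1 + t) ^ ((3 : ℝ) / 2) ≤ 4 * (t * Real.sqrt t) := by
      have h1 : (1 + t) ^ ((3 : ℝ) / 2) ≤ (2 * t) ^ ((3 : ℝ) / 2) :=
        Real.rpow_le_rpow (by linarith) (by linarith) (by norm_num)
      have h2 : ((2 * t) : ℝ) ^ ((3 : ℝ) / 2)
          = (2 : ℝ) ^ ((3 : ℝ) / 2) * t ^ ((3 : ℝ) / 2) := Real.mul_rpow (by norm_num) ht0.le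
      have h3 : t ^ ((3 : ℝ) / 2) = t * Real.sqrt t := by
        rw [show ((3 : ℝ) / 2) = 1 + (1 / 2 : ℝ) by norm_num, Real.rpow_add ht0,
          Real.rpow_one, ← Real.sqrt_eq_rpow]
      have h4 : (0 : ℝ) ≤ t * Real.sqrt t := by positivity
      have h5 : (0:ℝ) ≤ t ^ ((3:ℝ)/2) := Real.rpow_nonneg ht0.le _
      calc (1 + t) ^ ((3 : ℝ) / 2) ≤ (2 : ℝ) ^ ((3 : ℝ) / 2) * t ^ ((3 : ℝ) / 2) := by
            rw [← h2]; exact h1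
        _ ≤ 4 * t ^ ((3 : ℝ) / 2) := mul_le_mul_of_nonneg_right h24 h5
        _ = 4 * (t * Real.sqrt t) := by rw [h3]
    calc (1 / ((n : ℝ) + 1)) * ∑ j ∈ Finset.range (n + 1),
          Real.sin (Real.pi * j / ((n : ℝ) + 1)) ^ 2 *
            Real.exp (-(2 * t * Real.sin (Real.pi * j / ((n : ℝ) + 1)) ^ 2) / γ)
        ≤ γ * Real.sqrt γ / (Real.exp 1 * (t * Real.sqrt t)) := hchain
      _ ≤ 4 * (1 + γ * Real.sqrt γ) / (1 + t) ^ ((3 : ℝ) / 2) := by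
          rw [div_le_div_iff₀ (by positivity) hRpos]
          have h4 : (0 : ℝ) < t * Real.sqrt t := by positivity
          nlinarith [hpow, hg0, h4, he2, mul_le_mul_of_nonneg_left hpow hg0,
            mul_nonneg (mul_nonneg hg0 h4.le) (by linarith : (0:ℝ) ≤ Real.exp 1 - 2),
            mul_nonneg h4.le (by linarith : (0:ℝ) ≤ Real.exp 1 - 2)]
end

section
/- For every w ∈ ℂ with w ∉ [−1,1] (as a subset of ℝ ⊂ ℂ) and every integer n ≥ 1, letting Φ_+(w) denote the unique solution z with |z| < 1 of z + 1/z = 2w, one has the identity: (1/(n+1)) Σ_{k ∈ T̂_n} e^{2πik} / (e^{4πik} − 2w e^{2πik} + 1) = (Φ_+(w)^{n+1} + 1)·Φ_+(w) / [(Φ_+(w)² − 1)(1 − Φ_+(w)^{n+1})]. -/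
open Finset Complex

lemma root_pow (N : ℕ) (hN : 0 < N) (j : ℕ) :
    Complex.exp (2 * Real.pi * Complex.I * j / N) ^ N = 1 := by
  rw [← Complex.exp_nat_mul]
  have hNc : (N:ℂ) ≠ 0 := Nat.cast_ne_zero.mpr hN.ne'
  rw [show (N:ℂ) * (2 * Real.pi * Complex.I * j / N) = j * (2 * Real.pi * Complex.I) by
    field_simp]
  exact_mod_cast Complex.exp_int_mul_two_pi_mul_I j

lemma sum_inv_root_sub (N : ℕ) (hN : 0 < N) (a : ℂ) (haN : a ^ N ≠ 1) :
    ∑ j ∈ Finset.range N, 1 / (Complex.exp (2 * Real.pi * Complex.I * j / N) - a)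
      = N * a ^ (N - 1) / (1 - a ^ N) := by
  have hNc : (N:ℂ) ≠ 0 := Nat.cast_ne_zero.mpr hN.ne'
  have hden : (1 : ℂ) - a ^ N ≠ 0 := sub_ne_zero.mpr (fun h => haN h.symm)
  have key : ∀ j : ℕ, 1 / (Complex.exp (2 * Real.pi * Complex.I * j / N) - a)
      = (∑ m ∈ Finset.range N,
          Complex.exp (2 * Real.pi * Complex.I * j / N) ^ m * a ^ (N - 1 - m)) / (1 - a ^ N) := by
    intro j
    set x := Complex.exp (2 * Real.pi * Complex.I * j / N) with hx
    have hxN : x ^ N = 1 := root_pow N hN j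
    have hxa : x - a ≠ 0 := by
      intro h
      exact haN (by rw [← sub_eq_zero.mp h, hxN])
    rw [div_eq_div_iff hxa hden, one_mul, geom_sum₂_mul, hxN]
  rw [Finset.sum_congr rfl (fun j _ => key j), ← Finset.sum_div, Finset.sum_comm]
  congr 1
  have inner : ∀ m ∈ Finset.range N,
      ∑ j ∈ Finset.range N, Complex.exp (2 * Real.pi * Complex.I * j / N) ^ m * a ^ (N - 1 - m)
      = (∑ j ∈ Finset.range N, Complex.exp (2 * Real.pi * Complex.I * m / N) ^ j) * a ^ (N - 1 - m) := by
    intro m _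
    rw [← Finset.sum_mul]
    congr 1
    refine Finset.sum_congr rfl (fun j _ => ?_)
    rw [← Complex.exp_nat_mul, ← Complex.exp_nat_mul]
    congr 1
    ring
  rw [Finset.sum_congr rfl inner]
  rw [Finset.sum_eq_single_of_mem 0 (Finset.mem_range.mpr hN)]
  · simp
  · intro m hm hm0
    have hmN : m < N := Finset.mem_range.mp hm
    set y := Complex.exp (2 * Real.pi * Complex.I * m / N) with hy
    have hyN : y ^ N = 1 := root_pow N hN m
    have hy1 : y ≠ 1 := by
      intro h
      rw [hy] at h
      obtain ⟨k, hk⟩ := Complex.exp_eq_one_iff.mp h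
      have h2 : (2:ℂ) * Real.pi * Complex.I ≠ 0 := by
        simp [Real.pi_ne_zero, Complex.I_ne_zero]
      field_simp at hk
      have hmc : (m : ℂ) = k * N := mul_left_cancel₀ h2 (by linear_combination (2 * Real.pi * Complex.I) * hk)
      have hmz : (m : ℤ) = k * N := by exact_mod_cast hmc
      have h0 : (0:ℤ) < m := by exact_mod_cast Nat.pos_of_ne_zero hm0
      have hlt : (m:ℤ) < N := by exact_mod_cast hmN
      have hNz : (0:ℤ) < N := by exact_mod_cast hN
      rcases le_or_gt k 0 with hk0 | hk1
      · have : k * (N:ℤ) ≤ 0 := mul_nonpos_of_nonpos_of_nonneg hk0 hNz.le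
        linarith
      · have : (N:ℤ) ≤ k * N := le_mul_of_one_le_left hNz.le hk1
        linarith
    rw [geom_sum_eq hy1, hyN]
    simp


/-- For `w ∈ ℂ ∖ [−1,1]` and `z` the unique solution with `|z| < 1` of
`z + 1/z = 2w`, one has
`(1/(n+1)) ∑_{k ∈ T̂_n} e^{2πik}/(e^{4πik} − 2w e^{2πik} + 1)
  = (z^{n+1}+1)·z / ((z²−1)(1−z^{n+1}))`. -/
theorem stmt10 (w : ℂ) (hw : ∀ x : ℝ, x ∈ Set.Icc (-1 : ℝ) 1 → (x : ℂ) ≠ w)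
    (z : ℂ) (hz0 : z ≠ 0) (hz1 : ‖z‖ < 1) (hzw : z + 1 / z = 2 * w)
    (n : ℕ) (hn : 1 ≤ n) :
    (1 / ((n : ℂ) + 1)) * ∑ j ∈ Finset.range (n + 1),
        Complex.exp (2 * Real.pi * Complex.I * j / (n + 1)) /
          (Complex.exp (4 * Real.pi * Complex.I * j / (n + 1))
            - 2 * w * Complex.exp (2 * Real.pi * Complex.I * j / (n + 1)) + 1)
      = ((z ^ (n + 1) + 1) * z) / ((z ^ 2 - 1) * (1 - z ^ (n + 1))) := by
  have hzpos : 0 < ‖z‖ := norm_pos_iff.mpr hz0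
  have hzN : z ^ (n + 1) ≠ 1 := by
    intro h
    have : ‖z ^ (n+1)‖ < 1 := by
      rw [norm_pow]; exact pow_lt_one₀ (norm_nonneg _) hz1 (by omega)
    rw [h] at this; simp at this
  have hzinvN : (1/z) ^ (n + 1) ≠ 1 := by
    intro h
    have h1 : 1 < ‖(1/z)‖ := by
      rw [norm_div, norm_one]; exact (one_lt_one_div hzpos hz1)
    have : 1 < ‖(1/z) ^ (n+1)‖ := by
      rw [norm_pow]; exact one_lt_pow₀ h1 (by omega)
    rw [h] at this; simp at this
  have hz2 : z ^ 2 - 1 ≠ 0 := by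
    intro h
    have h1 : z ^ 2 = 1 := sub_eq_zero.mp h
    have : ‖z‖ ^ 2 < 1 := pow_lt_one₀ (norm_nonneg _) hz1 (by omega)
    rw [← norm_pow, h1] at this; simp at this
  have hzz : z - 1/z ≠ 0 := by
    intro h
    apply hz2
    have := sub_eq_zero.mp h
    field_simp at this
    linear_combination this
  have h1zN : (1:ℂ) - z ^ (n+1) ≠ 0 := sub_ne_zero.mpr (fun h => hzN h.symm)
  have h1zinvN : (1:ℂ) - (1/z) ^ (n+1) ≠ 0 := sub_ne_zero.mpr (fun h => hzinvN h.symm)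
  have hNc : ((n:ℂ) + 1) ≠ 0 := by
    have : ((n:ℂ)+1) = ((n+1 : ℕ) : ℂ) := by push_cast; ring
    rw [this]; exact_mod_cast Nat.succ_ne_zero n
  -- roots of unity
  have hroot : ∀ j : ℕ, Complex.exp (2 * Real.pi * Complex.I * j / ((n:ℂ)+1)) ^ (n+1) = 1 := by
    intro j
    have := root_pow (n+1) (Nat.succ_pos n) j
    push_cast at this
    exact this
  have hterm : ∀ j : ℕ,
      Complex.exp (2 * Real.pi * Complex.I * j / ((n:ℂ) + 1)) /
          (Complex.exp (4 * Real.pi * Complex.I * j / ((n:ℂ) + 1))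
            - 2 * w * Complex.exp (2 * Real.pi * Complex.I * j / ((n:ℂ) + 1)) + 1)
      = (1/(z - 1/z)) * (z * (1 / (Complex.exp (2 * Real.pi * Complex.I * j / ((n:ℂ)+1)) - z))
          - (1/z) * (1 / (Complex.exp (2 * Real.pi * Complex.I * j / ((n:ℂ)+1)) - (1/z)))) := by
    intro j
    set ζ := Complex.exp (2 * Real.pi * Complex.I * j / ((n:ℂ)+1)) with hζ
    have hsq : Complex.exp (4 * Real.pi * Complex.I * j / ((n:ℂ) + 1)) = ζ ^ 2 := by
      rw [hζ, ← Complex.exp_nat_mul]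
      congr 1
      push_cast
      ring
    have hζz : ζ - z ≠ 0 := by
      intro h
      exact hzN (by rw [← sub_eq_zero.mp h, hroot j])
    have hζzi : ζ - 1/z ≠ 0 := by
      intro h
      exact hzinvN (by rw [← sub_eq_zero.mp h, hroot j])
    have hfac : ζ ^ 2 - (z + 1 / z) * ζ + 1 = (ζ - z) * (ζ - 1 / z) := by
      field_simp
      ring
    have hB : ζ - 1/z = (z*ζ - 1)/z := by field_simp
    have hC : z - 1/z = (z^2 - 1)/z := by field_simp
    have hzζ : z*ζ - 1 ≠ 0 := by
      intro h
      apply hζzi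
      rw [hB, h, zero_div]
    rw [hsq, ← hzw, hfac, hB, hC]
    field_simp
    rw [mul_comm ζ z, div_eq_iff hzζ, sub_mul, div_mul_cancel₀ _ hzζ]
    ring
  rw [Finset.sum_congr rfl (fun j _ => hterm j)]
  have Sz := sum_inv_root_sub (n+1) (Nat.succ_pos n) z hzN
  have Szi := sum_inv_root_sub (n+1) (Nat.succ_pos n) (1/z) hzinvN
  simp only [Nat.add_sub_cancel] at Sz Szi
  push_cast at Sz Szi
  have Szi' : ((n:ℂ) + 1) * (1 / z) ^ n / (1 - (1 / z) ^ (n + 1))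
      = ((n:ℂ) + 1) * z / (z ^ (n + 1) - 1) := by
    rw [div_eq_div_iff h1zinvN (sub_ne_zero.mpr hzN)]
    field_simp
    linear_combination z * (by rw [← mul_pow, mul_inv_cancel₀ hz0, one_pow] : z ^ n * z⁻¹ ^ n = 1) + z⁻¹ ^ n * mul_inv_cancel₀ hz0
  rw [← Finset.mul_sum, Finset.sum_sub_distrib, ← Finset.mul_sum, ← Finset.mul_sum, Sz, Szi, Szi']
  have hzN' : z ^ (n + 1) - 1 ≠ 0 := sub_ne_zero.mpr hzN
  have hB : z * (((n:ℂ)+1) * z^n/(1 - z^(n+1))) - (1/z) * (((n:ℂ)+1) * z/(z^(n+1) - 1))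
      = ((n:ℂ)+1) * (z^(n+1)+1) / (1 - z^(n+1)) := by
    rw [eq_div_iff h1zN]
    field_simp
    ring
  rw [hB]
  have hC : z - 1/z = (z^2 - 1)/z := by field_simp
  rw [hC, one_div_div]
  field_simp
end

section
/- Let c_n(η) := (1/(n+1)) Σ_{k ∈ T̂_n} (1 + cos(2πk)) / (−η² + 4 sin²(πk) + 2iγη). Then there exists C > 0 depending only on γ such that |c_n(η)| ≤ C/(|η| + η²) for all η ≠ 0 and n ≥ 1. -/
open Finset Complex

/-- With `c_n(η) = (1/(n+1)) ∑_k (1 + cos(2πk))/(−η² + 4 sin²(πk) + 2iγη)`,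
there is `C > 0` depending only on `γ` with `|c_n(η)| ≤ C/(|η| + η²)`
for all `η ≠ 0` and `n ≥ 1`. -/
theorem stmt12 (γ : ℝ) (hγ : 0 < γ) :
    ∃ C : ℝ, 0 < C ∧ ∀ η : ℝ, η ≠ 0 → ∀ n : ℕ, 1 ≤ n →
      ‖(1 / ((n : ℂ) + 1)) * ∑ j ∈ Finset.range (n + 1),
          (1 + ((Real.cos (2 * Real.pi * j / (n + 1)) : ℝ) : ℂ)) /
            (-(η : ℂ) ^ 2 + 4 * ((Real.sin (Real.pi * j / (n + 1)) : ℝ) : ℂ) ^ 2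
              + 2 * Complex.I * (γ : ℂ) * (η : ℂ))‖
        ≤ C / (|η| + η ^ 2) := by
  refine ⟨8 + 4 / γ, by positivity, ?_⟩
  intro η hη n hn
  have hηpos : 0 < |η| := abs_pos.mpr hη
  have hsq : |η| ^ 2 = η ^ 2 := sq_abs η
  set B : ℝ := (8 + 4 / γ) / (|η| + η ^ 2) with hB
  have hBpos : 0 < B := by positivity
  have key : ∀ j ∈ Finset.range (n + 1),
      ‖(1 + ((Real.cos (2 * Real.pi * j / (n + 1)) : ℝ) : ℂ)) /
            (-(η : ℂ) ^ 2 + 4 * ((Real.sin (Real.pi * j / (n + 1)) : ℝ) : ℂ) ^ 2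
              + 2 * Complex.I * (γ : ℂ) * (η : ℂ))‖ ≤ B := by
    intro j _
    set s : ℝ := Real.sin (Real.pi * j / (n + 1)) with hs
    set c : ℝ := Real.cos (2 * Real.pi * j / (n + 1)) with hc
    set z : ℂ := -(η : ℂ) ^ 2 + 4 * (s : ℂ) ^ 2 + 2 * Complex.I * (γ : ℂ) * (η : ℂ)
      with hz
    have him : z.im = 2 * γ * η := by
      simp [hz, ← Complex.ofReal_pow]
    have hre : z.re = -η ^ 2 + 4 * s ^ 2 := by
      simp [hz, ← Complex.ofReal_pow]
    have h1 : 2 * γ * |η| ≤ ‖z‖ := by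
      have := Complex.abs_im_le_norm z
      rw [him] at this
      calc 2 * γ * |η| = |2 * γ * η| := by
            rw [abs_mul, abs_mul]
            rw [abs_of_pos hγ, abs_of_pos (by norm_num : (0:ℝ) < 2)]
        _ ≤ ‖z‖ := this
    have h2 : η ^ 2 - 4 ≤ ‖z‖ := by
      have hs1 : s ^ 2 ≤ 1 := Real.sin_sq_le_one _
      have := Complex.abs_re_le_norm z
      rw [hre] at this
      have : -(-η ^ 2 + 4 * s ^ 2) ≤ ‖z‖ :=
        le_trans (neg_le_abs _) this
      linarith
    have hznorm : 0 < ‖z‖ := lt_of_lt_of_le (by positivity) h1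
    have hnum : ‖(1 : ℂ) + (c : ℂ)‖ ≤ 2 := by
      have : ((1 : ℂ) + (c : ℂ)) = ((1 + c : ℝ) : ℂ) := by push_cast; ring
      rw [this, Complex.norm_real, Real.norm_eq_abs]
      have h1 : -1 ≤ c := Real.neg_one_le_cos _
      have h2 : c ≤ 1 := Real.cos_le_one _
      rw [_root_.abs_of_nonneg (by linarith)]; linarith
    rw [norm_div]
    rw [div_le_iff₀ hznorm]
    calc ‖(1 : ℂ) + (c : ℂ)‖ ≤ 2 := hnum
      _ ≤ B * ‖z‖ := by
        by_cases hcase : η ^ 2 ≤ 8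
        · have hle : |η| + η ^ 2 ≤ 4 * |η| := by nlinarith
          have hBge : 1 / (γ * |η|) ≤ B := by
            rw [hB, div_le_div_iff₀ (by positivity) (by positivity)]
            have : (8 + 4 / γ) * (γ * |η|) = (8 * γ + 4) * |η| := by
              field_simp
            rw [mul_comm] at this
            nlinarith
          calc (2:ℝ) = (2 * γ * |η|) * (1 / (γ * |η|)) := by field_simp
            _ ≤ ‖z‖ * B := by
              apply mul_le_mul h1 hBge (by positivity) (norm_nonneg _)
            _ = B * ‖z‖ := mul_comm _ _
        · push_neg at hcase
          have h2' : η ^ 2 / 2 ≤ ‖z‖ := by linarith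
          have hBge : 4 / η ^ 2 ≤ B := by
            rw [hB, div_le_div_iff₀ (by positivity) (by positivity)]
            have habs : |η| ≤ η ^ 2 := by nlinarith [_root_.sq_abs η, abs_nonneg η]
            have h4γ : 0 ≤ (4 / γ) * η ^ 2 := by positivity
            nlinarith
          calc (2:ℝ) = (η ^ 2 / 2) * (4 / η ^ 2) := by field_simp; ring
            _ ≤ ‖z‖ * B := by
              apply mul_le_mul h2' hBge (by positivity) (norm_nonneg _)
            _ = B * ‖z‖ := mul_comm _ _
  have hsum : ‖∑ j ∈ Finset.range (n + 1),
      (1 + ((Real.cos (2 * Real.pi * j / (n + 1)) : ℝ) : ℂ)) /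
        (-(η : ℂ) ^ 2 + 4 * ((Real.sin (Real.pi * j / (n + 1)) : ℝ) : ℂ) ^ 2
          + 2 * Complex.I * (γ : ℂ) * (η : ℂ))‖ ≤ (n + 1) * B := by
    calc _ ≤ ∑ _j ∈ Finset.range (n + 1), B := norm_sum_le_of_le _ key
      _ = (n + 1) * B := by
        rw [Finset.sum_const, Finset.card_range]; push_cast; ring
  rw [norm_mul]
  have hc : ‖(1 / ((n : ℂ) + 1))‖ = 1 / ((n : ℝ) + 1) := by
    have h : ((n : ℂ) + 1) = ((((n : ℝ) + 1) : ℝ) : ℂ) := by push_cast; ring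
    rw [h, norm_div, norm_one, Complex.norm_real, Real.norm_eq_abs,
      abs_of_pos (by positivity)]
  rw [hc]
  have hn1 : (0:ℝ) < (n:ℝ) + 1 := by positivity
  calc 1 / ((n : ℝ) + 1) * _ ≤ 1 / ((n : ℝ) + 1) * (((n:ℝ) + 1) * B) := by
        apply mul_le_mul_of_nonneg_left hsum (by positivity)
    _ = B := by field_simp
end

section
/- Let Φ_+(w) = w − √(w²−1) with the branch of square root mapping ℂ∖(−∞,0] into the open right half-plane. Then there exists δ > 0 and a constant c > 0 such that for all real η with 0 < η² ≤ δ: |Φ_+(1 − η²/2 + iγη)| ≤ 1 − c√|η|. -/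
open Complex

set_option maxHeartbeats 1000000 in
/-- With `Φ₊(w) = w − (w²−1)^{1/2}` (principal branch), there exist `δ > 0` and
`c > 0` such that for all real `η` with `0 < η² ≤ δ`,
`|Φ₊(1 − η²/2 + iγη)| ≤ 1 − c√|η|`. -/
theorem stmt17 (γ : ℝ) (hγ : 0 < γ) :
    ∃ δ : ℝ, 0 < δ ∧ ∃ c : ℝ, 0 < c ∧ ∀ η : ℝ, 0 < η ^ 2 → η ^ 2 ≤ δ →
      ‖((1 : ℂ) - (η : ℂ) ^ 2 / 2 + Complex.I * (γ : ℂ) * (η : ℂ))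
          - (((1 : ℂ) - (η : ℂ) ^ 2 / 2 + Complex.I * (γ : ℂ) * (η : ℂ)) ^ 2 - 1)
              ^ ((1 : ℂ) / 2)‖
        ≤ 1 - c * Real.sqrt |η| := by
  set r : ℝ := min (γ / (2 * (1 + γ ^ 2))) (γ / 4) with hrdef
  have hr0 : 0 < r := lt_min (by positivity) (by positivity)
  refine ⟨r ^ 2, by positivity, Real.sqrt γ / 8, by positivity, ?_⟩
  intro η hη1 hη2
  have hηne : η ≠ 0 := by
    intro h; rw [h] at hη1; norm_num at hη1
  set t : ℝ := |η| with htdef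
  have ht0 : 0 < t := abs_pos.2 hηne
  have htr : t ≤ r := by
    have ht2 : t ^ 2 ≤ r ^ 2 := by rw [htdef, _root_.sq_abs]; exact hη2
    nlinarith
  have h1 : t ≤ γ / (2 * (1 + γ ^ 2)) := htr.trans (min_le_left _ _)
  have h2 : t ≤ γ / 4 := htr.trans (min_le_right _ _)
  have hγ2 : (1 + γ ^ 2) * t ≤ γ / 2 := by
    rw [le_div_iff₀ (by positivity)] at h1
    linarith
  have h3 : γ * t ≤ 1 / 2 := by nlinarith [sq_nonneg (γ - 1), sq_nonneg γ]
  have h4 : t ≤ 1 / 4 := by nlinarith [sq_nonneg (γ - 1)]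
  have ht2 : η ^ 2 = t ^ 2 := (_root_.sq_abs η).symm
  -- square roots
  have hu : Real.sqrt t ^ 2 = t := Real.sq_sqrt ht0.le
  have hg : Real.sqrt γ ^ 2 = γ := Real.sq_sqrt hγ.le
  have hu0 : 0 < Real.sqrt t := Real.sqrt_pos.2 ht0
  have hg0 : 0 < Real.sqrt γ := Real.sqrt_pos.2 hγ
  have hu1 : Real.sqrt t ≤ 1 := by
    rw [show (1 : ℝ) = Real.sqrt 1 by simp]
    exact Real.sqrt_le_sqrt (by linarith)
  have hug : Real.sqrt t ≤ Real.sqrt γ / 2 := by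
    have e2 : Real.sqrt (γ / 4) = Real.sqrt γ / 2 := by
      rw [show γ / 4 = (Real.sqrt γ / 2) ^ 2 by rw [div_pow, hg]; ring]
      exact Real.sqrt_sq (by positivity)
    rw [← e2]; exact Real.sqrt_le_sqrt h2
  set w : ℂ := (1 : ℂ) - (η : ℂ) ^ 2 / 2 + Complex.I * (γ : ℂ) * (η : ℂ) with hwdef
  set z : ℂ := w ^ 2 - 1 with hzdef
  set A : ℝ := -(1 + γ ^ 2) * η ^ 2 + η ^ 4 / 4 with hAdef
  set B : ℝ := γ * η * (2 - η ^ 2) with hBdef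
  have hz : z = (A : ℂ) + Complex.I * (B : ℂ) := by
    rw [hzdef, hwdef, hAdef, hBdef]; push_cast
    linear_combination (η : ℂ) ^ 2 * (γ : ℂ) ^ 2 * Complex.I_sq
  have hzre : z.re = A := by rw [hz]; simp
  have hzim : z.im = B := by rw [hz]; simp
  have hBpos : 0 < γ * t * (2 - t ^ 2) := by
    have : (0 : ℝ) < 2 - t ^ 2 := by nlinarith
    positivity
  have hBabs : |B| = γ * t * (2 - t ^ 2) := by
    rw [hBdef, abs_mul, abs_mul, abs_of_pos hγ, ← htdef, ht2,
      abs_of_pos (show (0 : ℝ) < 2 - t ^ 2 by nlinarith)]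
  have himne : z.im ≠ 0 := by
    rw [hzim]
    intro h
    rw [h, abs_zero] at hBabs
    linarith
  have hzne : z ≠ 0 := by
    intro h; rw [h] at himne; simp at himne
  set s : ℂ := z ^ ((1 : ℂ) / 2) with hsdef
  have hs2 : s ^ 2 = z := by
    rw [hsdef, sq, ← Complex.cpow_add _ _ hzne]
    norm_num
  have hprod : (w - s) * (w + s) = 1 := by
    have e : (w - s) * (w + s) = w ^ 2 - s ^ 2 := by ring
    rw [e, hs2, hzdef]; ring
  have hsre : s.re = Real.sqrt ((‖z‖ + z.re) / 2) := by
    rw [hsdef, show ((1 : ℂ) / 2) = (2⁻¹ : ℂ) by norm_num]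
    exact Complex.cpow_inv_two_re z
  have habs : γ * t * (2 - t ^ 2) ≤ ‖z‖ := by
    have h5 : |z.im| ≤ ‖z‖ := Complex.abs_im_le_norm z
    rw [hzim, hBabs] at h5
    exact h5
  have hA : γ * t / 2 ≤ ‖z‖ + z.re := by
    rw [hzre, hAdef, ht2]
    nlinarith [sq_nonneg t, sq_nonneg (t ^ 2)]
  have hsre_lb : Real.sqrt γ * Real.sqrt t / 2 ≤ s.re := by
    rw [hsre]
    have e1 : Real.sqrt (γ * t / 4) = Real.sqrt γ * Real.sqrt t / 2 := by
      rw [show γ * t / 4 = (Real.sqrt γ * Real.sqrt t / 2) ^ 2 by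
        rw [div_pow, mul_pow, hg, hu]; ring]
      exact Real.sqrt_sq (by positivity)
    rw [← e1]
    exact Real.sqrt_le_sqrt (by linarith)
  set a : ℝ := Real.sqrt γ * Real.sqrt t / 4 with hadef
  have ha0 : 0 < a := by positivity
  have ha1 : t ^ 2 / 2 ≤ a := by
    rw [hadef]
    nlinarith [hu, hu1, hug, hu0.le, hg0.le]
  have ha2 : a ≤ 1 := by
    have haa : a ^ 2 = γ * t / 16 := by rw [hadef, div_pow, mul_pow, hg, hu]; ring
    nlinarith
  have hwre : w.re = 1 - η ^ 2 / 2 := by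
    have hw : w = ((1 - η ^ 2 / 2 : ℝ) : ℂ) + Complex.I * ((γ * η : ℝ) : ℂ) := by
      rw [hwdef]; push_cast; ring
    rw [hw]
    simp only [Complex.add_re, Complex.ofReal_re, Complex.mul_re, Complex.I_re,
      Complex.I_im, Complex.ofReal_im]
    ring
  have hwsre : 1 + a ≤ (w + s).re := by
    have e : (w + s).re = w.re + s.re := by simp
    rw [e, hwre, ht2]
    have h6 : 2 * a ≤ s.re := by
      rw [hadef]; linarith [hsre_lb]
    linarith
  have hnorm : 1 + a ≤ ‖w + s‖ :=
    le_trans hwsre (Complex.re_le_norm _)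
  have hnormne : ‖w + s‖ ≠ 0 := ne_of_gt (lt_of_lt_of_le (by linarith) hnorm)
  have hΦ : ‖w - s‖ = 1 / ‖w + s‖ := by
    have e := congrArg norm hprod
    rw [norm_mul, norm_one] at e
    rw [eq_div_iff hnormne]; exact e
  rw [hΦ]
  have key : 1 / ‖w + s‖ ≤ 1 / (1 + a) :=
    one_div_le_one_div_of_le (by linarith) hnorm
  have key2 : 1 / (1 + a) ≤ 1 - a / 2 := by
    rw [div_le_iff₀ (by linarith)]
    nlinarith
  have efin : Real.sqrt γ / 8 * Real.sqrt t = a / 2 := by rw [hadef]; ring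
  rw [efin]
  linarith
end
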